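/- Let β > 0 and 0 < η < β + 2. Then N(β, η) = (β + 2)(β + 2 + 2η) + (β + 2 − 2η)·√((β + 2)(β + 2 + 8η)) > 0. -/
import Mathlib

/-- For `β > 0` and `0 < η < β + 2`, the quantity
`N(β, η) = (β + 2)(β + 2 + 2η) + (β + 2 − 2η)√((β + 2)(β + 2 + 8η))` is positive. -/
theorem dgh_N_positive (β η : ℝ) (hβ : 0 < β) (hη : 0 < η) (hηβ : η < β + 2) :
    0 < (β + 2) * (β + 2 + 2 * η)
      + (β + 2 - 2 * η) * Real.sqrt ((β + 2) * (β + 2 + 8 * η)) := by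
  set s := Real.sqrt ((β + 2) * (β + 2 + 8 * η)) with hs
  have hs0 : 0 ≤ s := Real.sqrt_nonneg _
  have hs2 : s ^ 2 = (β + 2) * (β + 2 + 8 * η) := Real.sq_sqrt (by positivity)
  nlinarith [sq_nonneg ((β + 2) - s), sq_nonneg ((β + 2 + 2*η) - s), mul_pos hη hη,
    mul_pos (mul_pos hη hη) hβ, sq_nonneg (β + 2 - 2*η), mul_nonneg hs0 (sq_nonneg (β+2-2*η))]
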